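/- Let ψ ∈ L¹(ℝⁿ; ℂ), let φ : ℝⁿ → ℝ be continuously differentiable with compact support, and set φ_J(u) = 2^{−nJ} φ(2^{−J}u). For every x ∈ L²(ℝⁿ) and every c ∈ ℝⁿ, with (T_c x)(u) = x(u − c), the first-order scattering coefficients satisfy ‖ |(T_c x) ⋆ ψ| ⋆ φ_J − |x ⋆ ψ| ⋆ φ_J ‖_{L²} ≤ 2^{−J} ‖c‖ · ‖∇φ‖_{L¹} · ‖ψ‖_{L¹} · ‖x‖_{L²}, where |·| is the pointwise modulus. Hence the scattering coefficients ρ(x ⋆ ψ) ⋆ φ_J are locally invariant to translations at the scale 2^J. -/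

import Mathlib

open MeasureTheory
open ENNReal

lemma sq_rpow_half (x : ℝ≥0∞) : (x ^ ((2:ℝ)⁻¹)) ^ (2:ℝ) = x := by
  rw [← ENNReal.rpow_mul]; norm_num

lemma mul_self_rpow_half (x : ℝ≥0∞) : x ^ ((2:ℝ)⁻¹) * x ^ ((2:ℝ)⁻¹) = x := by
  have h := sq_rpow_half x
  rwa [show (2:ℝ) = ((2:ℕ):ℝ) by norm_num, ENNReal.rpow_natCast, pow_two] at h

lemma rpow_half_mul_self (x : ℝ≥0∞) : (x * x) ^ ((2:ℝ)⁻¹) = x := by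
  have : x * x = x ^ (2:ℝ) := by
    rw [show (2:ℝ) = ((2:ℕ):ℝ) by norm_num, ENNReal.rpow_natCast, pow_two]
  rw [this, ← ENNReal.rpow_mul]; norm_num

lemma youngL2 {n : ℕ} (F G : EuclideanSpace ℝ (Fin n) → ℝ≥0∞)
    (hF : Measurable F) (hG : Measurable G) :
    (∫⁻ u, (∫⁻ v, F v * G (u - v)) ^ (2:ℝ)) ^ ((2:ℝ)⁻¹) ≤
      (∫⁻ u, F u ^ (2:ℝ)) ^ ((2:ℝ)⁻¹) * ∫⁻ u, G u := by
  have hconj : Real.HolderConjugate 2 2 := Real.HolderConjugate.two_two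
  have hGinv : ∀ u : EuclideanSpace ℝ (Fin n), ∫⁻ v, G (u - v) = ∫⁻ v, G v := by
    intro u
    have hneg : ∫⁻ v, G (u + (-v)) = ∫⁻ v, G (u + v) := by
      conv_rhs => rw [← Measure.map_neg_eq_self (volume : Measure (EuclideanSpace ℝ (Fin n)))]
      exact (lintegral_map (f := fun v => G (u + v)) (g := fun v => -v)
        (hG.comp (measurable_const.add measurable_id)) measurable_neg).symm
    calc ∫⁻ v, G (u - v) = ∫⁻ v, G (u + (-v)) := by simp_rw [sub_eq_add_neg]
    _ = ∫⁻ v, G (u + v) := hneg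
    _ = ∫⁻ v, G v := lintegral_add_left_eq_self (fun v => G v) u
  have key : ∀ u, (∫⁻ v, F v * G (u - v)) ^ (2:ℝ) ≤
      (∫⁻ v, F v ^ (2:ℝ) * G (u - v)) * ∫⁻ v, G v := by
    intro u
    have hGu : Measurable fun v : EuclideanSpace ℝ (Fin n) => G (u - v) :=
      hG.comp (measurable_const.sub measurable_id)
    have step : ∫⁻ v, F v * G (u - v) ≤
        (∫⁻ v, F v ^ (2:ℝ) * G (u - v)) ^ (1/(2:ℝ)) * (∫⁻ v, G (u - v)) ^ (1/(2:ℝ)) := by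
      have := ENNReal.lintegral_mul_le_Lp_mul_Lq volume hconj
        (f := fun v => F v * (G (u - v)) ^ ((2:ℝ)⁻¹))
        (g := fun v => (G (u - v)) ^ ((2:ℝ)⁻¹))
        ((hF.mul (hGu.pow_const _)).aemeasurable) ((hGu.pow_const _).aemeasurable)
      calc ∫⁻ v, F v * G (u - v)
          = ∫⁻ v, ((fun v => F v * (G (u - v)) ^ ((2:ℝ)⁻¹)) * fun v => (G (u - v)) ^ ((2:ℝ)⁻¹)) v := by
            refine lintegral_congr fun v => ?_
            simp only [Pi.mul_apply]
            rw [mul_assoc, mul_self_rpow_half]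
        _ ≤ (∫⁻ v, (F v * (G (u - v)) ^ ((2:ℝ)⁻¹)) ^ (2:ℝ)) ^ (1/(2:ℝ)) *
            (∫⁻ v, ((G (u - v)) ^ ((2:ℝ)⁻¹)) ^ (2:ℝ)) ^ (1/(2:ℝ)) := this
        _ = (∫⁻ v, F v ^ (2:ℝ) * G (u - v)) ^ (1/(2:ℝ)) * (∫⁻ v, G (u - v)) ^ (1/(2:ℝ)) := by
            congr 1
            · congr 1
              refine lintegral_congr fun v => ?_
              rw [ENNReal.mul_rpow_of_nonneg _ _ (by norm_num : (0:ℝ) ≤ 2), sq_rpow_half]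
            · congr 1
              exact lintegral_congr fun v => sq_rpow_half _
    calc (∫⁻ v, F v * G (u - v)) ^ (2:ℝ)
        ≤ ((∫⁻ v, F v ^ (2:ℝ) * G (u - v)) ^ (1/(2:ℝ)) * (∫⁻ v, G (u - v)) ^ (1/(2:ℝ))) ^ (2:ℝ) :=
          ENNReal.rpow_le_rpow step (by norm_num)
      _ = (∫⁻ v, F v ^ (2:ℝ) * G (u - v)) * ∫⁻ v, G (u - v) := by
          rw [ENNReal.mul_rpow_of_nonneg _ _ (by norm_num : (0:ℝ) ≤ 2), one_div,
            sq_rpow_half, sq_rpow_half]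
      _ = (∫⁻ v, F v ^ (2:ℝ) * G (u - v)) * ∫⁻ v, G v := by rw [hGinv u]
  have swap : ∫⁻ u, ∫⁻ v, F v ^ (2:ℝ) * G (u - v) =
      (∫⁻ u, F u ^ (2:ℝ)) * ∫⁻ u, G u := by
    rw [lintegral_lintegral_swap]
    · calc ∫⁻ v, ∫⁻ u, F v ^ (2:ℝ) * G (u - v)
          = ∫⁻ v, F v ^ (2:ℝ) * ∫⁻ u, G (u - v) := by
            refine lintegral_congr fun v => ?_
            exact lintegral_const_mul _ (hG.comp (measurable_id.sub measurable_const))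
        _ = ∫⁻ v, F v ^ (2:ℝ) * ∫⁻ u, G u := by
            refine lintegral_congr fun v => ?_
            rw [lintegral_sub_right_eq_self (fun u => G u) v]
        _ = (∫⁻ u, F u ^ (2:ℝ)) * ∫⁻ u, G u := lintegral_mul_const _ (hF.pow_const _)
    · exact (((hF.comp measurable_snd).pow_const _).mul
        (hG.comp (measurable_fst.sub measurable_snd))).aemeasurable
  calc (∫⁻ u, (∫⁻ v, F v * G (u - v)) ^ (2:ℝ)) ^ ((2:ℝ)⁻¹)
      ≤ (∫⁻ u, (∫⁻ v, F v ^ (2:ℝ) * G (u - v)) * ∫⁻ v, G v) ^ ((2:ℝ)⁻¹) :=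
        ENNReal.rpow_le_rpow (lintegral_mono key) (by norm_num)
    _ = ((∫⁻ u, F u ^ (2:ℝ)) * ((∫⁻ u, G u) * ∫⁻ u, G u)) ^ ((2:ℝ)⁻¹) := by
        have hmeas : Measurable fun u : EuclideanSpace ℝ (Fin n) =>
            ∫⁻ v, F v ^ (2:ℝ) * G (u - v) :=
          Measurable.lintegral_prod_right (((hF.comp measurable_snd).pow_const _).mul
            (hG.comp (measurable_fst.sub measurable_snd)))
        rw [lintegral_mul_const _ hmeas, swap, mul_assoc]
    _ = (∫⁻ u, F u ^ (2:ℝ)) ^ ((2:ℝ)⁻¹) * ∫⁻ u, G u := by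
        rw [ENNReal.mul_rpow_of_nonneg _ _ (by norm_num : (0:ℝ) ≤ 2⁻¹), rpow_half_mul_self]

lemma shift_L1 {n : ℕ} (φ : EuclideanSpace ℝ (Fin n) → ℝ)
    (hφ : ContDiff ℝ 1 φ) (hsupp : HasCompactSupport φ) (a : EuclideanSpace ℝ (Fin n)) :
    ∫⁻ s, (‖φ (s - a) - φ s‖₊ : ℝ≥0∞) ≤
      ENNReal.ofReal (‖a‖ * ∫ u, ‖fderiv ℝ φ u‖) := by
  have hcont : Continuous (fderiv ℝ φ) := hφ.continuous_fderiv one_ne_zero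
  have hDint : Integrable (fderiv ℝ φ) :=
    hcont.integrable_of_hasCompactSupport (hsupp.fderiv (𝕜 := ℝ))
  -- pointwise FTC bound
  have hΔ : ∀ s : EuclideanSpace ℝ (Fin n),
      ‖φ (s - a) - φ s‖ ≤ ∫ t in (0:ℝ)..1, ‖fderiv ℝ φ (s - t • a)‖ * ‖a‖ := by
    intro s
    have hder : ∀ t ∈ Set.uIcc (0:ℝ) 1,
        HasDerivAt (fun t : ℝ => φ (s - t • a)) ((fderiv ℝ φ (s - t • a)) (-a)) t := by
      intro t _
      have h1 : HasDerivAt (fun t : ℝ => s - t • a) (-a) t := by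
        simpa using ((hasDerivAt_id t).smul_const a).const_sub s
      exact ((hφ.differentiable one_ne_zero (s - t • a)).hasFDerivAt.comp_hasDerivAt t h1)
    have hcont' : Continuous fun t : ℝ => (fderiv ℝ φ (s - t • a)) (-a) :=
      ((hcont.comp (continuous_const.sub (continuous_id.smul continuous_const))).clm_apply
        continuous_const)
    have hftc := intervalIntegral.integral_eq_sub_of_hasDerivAt hder
      (hcont'.intervalIntegrable 0 1)
    have heq : φ (s - a) - φ s = ∫ t in (0:ℝ)..1, (fderiv ℝ φ (s - t • a)) (-a) := by
      rw [hftc]; simp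
    rw [heq]
    calc ‖∫ t in (0:ℝ)..1, (fderiv ℝ φ (s - t • a)) (-a)‖
        ≤ ∫ t in (0:ℝ)..1, ‖(fderiv ℝ φ (s - t • a)) (-a)‖ :=
          intervalIntegral.norm_integral_le_integral_norm zero_le_one
      _ ≤ ∫ t in (0:ℝ)..1, ‖fderiv ℝ φ (s - t • a)‖ * ‖a‖ := by
          refine intervalIntegral.integral_mono_on zero_le_one ?_ ?_ ?_
          · exact (hcont'.norm).intervalIntegrable _ _
          · exact (((hcont.comp (continuous_const.sub
              (continuous_id.smul continuous_const))).norm).mul continuous_const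
              ).intervalIntegrable _ _
          · intro t _
            calc ‖(fderiv ℝ φ (s - t • a)) (-a)‖
                ≤ ‖fderiv ℝ φ (s - t • a)‖ * ‖-a‖ := (fderiv ℝ φ (s - t • a)).le_opNorm _
              _ = ‖fderiv ℝ φ (s - t • a)‖ * ‖a‖ := by rw [norm_neg]
  -- pass to lintegral
  have hΔe : ∀ s : EuclideanSpace ℝ (Fin n), (‖φ (s - a) - φ s‖₊ : ℝ≥0∞) ≤
      ∫⁻ t in Set.Ioc (0:ℝ) 1, ENNReal.ofReal (‖fderiv ℝ φ (s - t • a)‖ * ‖a‖) := by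
    intro s
    have hm : Continuous fun t : ℝ => ‖fderiv ℝ φ (s - t • a)‖ * ‖a‖ :=
      ((hcont.comp (continuous_const.sub (continuous_id.smul continuous_const))).norm).mul
        continuous_const
    have hint : IntegrableOn (fun t : ℝ => ‖fderiv ℝ φ (s - t • a)‖ * ‖a‖) (Set.Ioc 0 1) :=
      hm.integrableOn_Ioc
    calc (‖φ (s - a) - φ s‖₊ : ℝ≥0∞) = ENNReal.ofReal ‖φ (s - a) - φ s‖ :=
          (ofReal_norm _).symm
      _ ≤ ENNReal.ofReal (∫ t in (0:ℝ)..1, ‖fderiv ℝ φ (s - t • a)‖ * ‖a‖) :=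
          ENNReal.ofReal_le_ofReal (hΔ s)
      _ = ENNReal.ofReal (∫ t in Set.Ioc (0:ℝ) 1, ‖fderiv ℝ φ (s - t • a)‖ * ‖a‖) := by
          rw [intervalIntegral.integral_of_le zero_le_one]
      _ = ∫⁻ t in Set.Ioc (0:ℝ) 1, ENNReal.ofReal (‖fderiv ℝ φ (s - t • a)‖ * ‖a‖) :=
          ofReal_integral_eq_lintegral_ofReal hint
            (Filter.Eventually.of_forall fun t => mul_nonneg (norm_nonneg _) (norm_nonneg _))
  calc ∫⁻ s, (‖φ (s - a) - φ s‖₊ : ℝ≥0∞)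
      ≤ ∫⁻ s, ∫⁻ t in Set.Ioc (0:ℝ) 1, ENNReal.ofReal (‖fderiv ℝ φ (s - t • a)‖ * ‖a‖) :=
        lintegral_mono hΔe
    _ = ∫⁻ t in Set.Ioc (0:ℝ) 1, ∫⁻ s, ENNReal.ofReal (‖fderiv ℝ φ (s - t • a)‖ * ‖a‖) := by
        refine lintegral_lintegral_swap ?_
        refine (ENNReal.measurable_ofReal.comp ?_).aemeasurable
        have : Continuous fun p : EuclideanSpace ℝ (Fin n) × ℝ =>
            ‖fderiv ℝ φ (p.1 - p.2 • a)‖ * ‖a‖ :=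
          ((hcont.comp (continuous_fst.sub (continuous_snd.smul continuous_const))).norm).mul
            continuous_const
        exact this.measurable
    _ = ∫⁻ t in Set.Ioc (0:ℝ) 1,
          (ENNReal.ofReal ‖a‖ * ∫⁻ s, ENNReal.ofReal ‖fderiv ℝ φ s‖) := by
        refine lintegral_congr fun t => ?_
        have hmeas : Measurable fun s : EuclideanSpace ℝ (Fin n) =>
            ENNReal.ofReal ‖fderiv ℝ φ (s - t • a)‖ :=
          ENNReal.measurable_ofReal.comp
            ((hcont.comp (continuous_id.sub continuous_const)).norm.measurable)
        calc ∫⁻ s, ENNReal.ofReal (‖fderiv ℝ φ (s - t • a)‖ * ‖a‖)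
            = ∫⁻ s, ENNReal.ofReal ‖fderiv ℝ φ (s - t • a)‖ * ENNReal.ofReal ‖a‖ := by
              refine lintegral_congr fun s => ?_
              rw [ENNReal.ofReal_mul (norm_nonneg _)]
          _ = (∫⁻ s, ENNReal.ofReal ‖fderiv ℝ φ (s - t • a)‖) * ENNReal.ofReal ‖a‖ :=
              lintegral_mul_const _ hmeas
          _ = (∫⁻ s, ENNReal.ofReal ‖fderiv ℝ φ s‖) * ENNReal.ofReal ‖a‖ := by
              rw [lintegral_sub_right_eq_self (fun s => ENNReal.ofReal ‖fderiv ℝ φ s‖) (t • a)]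
          _ = ENNReal.ofReal ‖a‖ * ∫⁻ s, ENNReal.ofReal ‖fderiv ℝ φ s‖ := mul_comm _ _
    _ = ENNReal.ofReal ‖a‖ * ∫⁻ s, ENNReal.ofReal ‖fderiv ℝ φ s‖ := by
        rw [setLIntegral_const, Real.volume_Ioc]
        norm_num
    _ = ENNReal.ofReal ‖a‖ * ENNReal.ofReal (∫ u, ‖fderiv ℝ φ u‖) := by
        congr 1
        simp_rw [ofReal_norm]
        exact (ofReal_integral_norm_eq_lintegral_enorm hDint).symm
    _ = ENNReal.ofReal (‖a‖ * ∫ u, ‖fderiv ℝ φ u‖) :=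
        (ENNReal.ofReal_mul (norm_nonneg _)).symm


lemma kernel_L1 {n : ℕ} (J : ℤ) (φ : EuclideanSpace ℝ (Fin n) → ℝ)
    (hφ : ContDiff ℝ 1 φ) (hsupp : HasCompactSupport φ) (c : EuclideanSpace ℝ (Fin n)) :
    ∫⁻ t, (‖(2:ℝ) ^ (-(n : ℤ) * J) * φ ((2:ℝ) ^ (-J) • (t - c)) -
        (2:ℝ) ^ (-(n : ℤ) * J) * φ ((2:ℝ) ^ (-J) • t)‖₊ : ℝ≥0∞) ≤
      ENNReal.ofReal ((2:ℝ) ^ (-J) * ‖c‖ * ∫ u, ‖fderiv ℝ φ u‖) := by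
  set r : ℝ := (2:ℝ) ^ (-J) with hr_def
  set A : ℝ := (2:ℝ) ^ (-(n : ℤ) * J) with hA_def
  have hrpos : 0 < r := by positivity
  have hApos : 0 < A := by positivity
  set a : EuclideanSpace ℝ (Fin n) := r • c with ha_def
  have hΔcont : Continuous fun s : EuclideanSpace ℝ (Fin n) => φ (s - a) - φ s :=
    (hφ.continuous.comp (continuous_id.sub continuous_const)).sub hφ.continuous
  have hΔmeas : Measurable fun s : EuclideanSpace ℝ (Fin n) => (‖φ (s - a) - φ s‖₊ : ℝ≥0∞) :=
    hΔcont.measurable.enorm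
  have hpt : ∀ t : EuclideanSpace ℝ (Fin n),
      (‖A * φ (r • (t - c)) - A * φ (r • t)‖₊ : ℝ≥0∞) =
        ENNReal.ofReal A * (‖φ (r • t - a) - φ (r • t)‖₊ : ℝ≥0∞) := by
    intro t
    have : A * φ (r • (t - c)) - A * φ (r • t) = A * (φ (r • t - a) - φ (r • t)) := by
      rw [smul_sub]; ring
    rw [this, ← enorm_eq_nnnorm, ← enorm_eq_nnnorm, ← ofReal_norm, ← ofReal_norm, norm_mul,
      Real.norm_eq_abs A, abs_of_pos hApos, ENNReal.ofReal_mul hApos.le]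
  have hscale : ∫⁻ t, (‖φ (r • t - a) - φ (r • t)‖₊ : ℝ≥0∞) =
      ENNReal.ofReal |(r ^ n)|⁻¹ * ∫⁻ s, (‖φ (s - a) - φ s‖₊ : ℝ≥0∞) := by
    have h1 : ∫⁻ t, (‖φ (r • t - a) - φ (r • t)‖₊ : ℝ≥0∞) =
        ∫⁻ s, (‖φ (s - a) - φ s‖₊ : ℝ≥0∞) ∂(Measure.map (r • ·) volume) :=
      (lintegral_map hΔmeas (measurable_const_smul r)).symm
    rw [h1, MeasureTheory.Measure.map_addHaar_smul volume hrpos.ne',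
      lintegral_smul_measure, finrank_euclideanSpace_fin, abs_inv, smul_eq_mul]
  have hconst : ENNReal.ofReal A * ENNReal.ofReal |(r ^ n)|⁻¹ = 1 := by
    rw [← ENNReal.ofReal_mul hApos.le]
    have : A * |(r ^ n)|⁻¹ = 1 := by
      rw [abs_of_pos (pow_pos hrpos n), hA_def, hr_def, ← zpow_natCast ((2:ℝ) ^ (-J)) n,
        ← zpow_mul, ← zpow_neg, ← zpow_add₀ (two_ne_zero)]
      norm_num [mul_comm]
    rw [this, ENNReal.ofReal_one]
  calc ∫⁻ t, (‖A * φ (r • (t - c)) - A * φ (r • t)‖₊ : ℝ≥0∞)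
      = ∫⁻ t, ENNReal.ofReal A * (‖φ (r • t - a) - φ (r • t)‖₊ : ℝ≥0∞) :=
        lintegral_congr hpt
    _ = ENNReal.ofReal A * ∫⁻ t, (‖φ (r • t - a) - φ (r • t)‖₊ : ℝ≥0∞) :=
        lintegral_const_mul _ (hΔmeas.comp (measurable_const_smul r))
    _ = ENNReal.ofReal A * (ENNReal.ofReal |(r ^ n)|⁻¹ *
          ∫⁻ s, (‖φ (s - a) - φ s‖₊ : ℝ≥0∞)) := by rw [hscale]
    _ = ∫⁻ s, (‖φ (s - a) - φ s‖₊ : ℝ≥0∞) := by rw [← mul_assoc, hconst, one_mul]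
    _ ≤ ENNReal.ofReal (‖a‖ * ∫ u, ‖fderiv ℝ φ u‖) := shift_L1 φ hφ hsupp a
    _ = ENNReal.ofReal (r * ‖c‖ * ∫ u, ‖fderiv ℝ φ u‖) := by
        rw [ha_def, norm_smul, Real.norm_eq_abs, abs_of_pos hrpos]



/-- Local translation invariance of first-order scattering coefficients
`ρ(x ⋆ ψ) ⋆ φ_J` (with `ρ` the pointwise modulus and
`φ_J(u) = 2^{−nJ} φ(2^{−J} u)`):
`‖ |(T_c x) ⋆ ψ| ⋆ φ_J − |x ⋆ ψ| ⋆ φ_J ‖_{L²}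
  ≤ 2^{−J} ‖c‖ ‖∇φ‖_{L¹} ‖ψ‖_{L¹} ‖x‖_{L²}`. -/
theorem scattering_translation_stability
    {n : ℕ} (J : ℤ) (ψ : EuclideanSpace ℝ (Fin n) → ℂ) (hψ : Integrable ψ)
    (φ : EuclideanSpace ℝ (Fin n) → ℝ)
    (hφ : ContDiff ℝ 1 φ) (hsupp : HasCompactSupport φ)
    (x : EuclideanSpace ℝ (Fin n) → ℂ) (hx : MemLp x 2 volume)
    (c : EuclideanSpace ℝ (Fin n)) :
    eLpNorm
      (fun u =>
        (∫ v, ‖∫ w, x (w - c) * ψ (v - w)‖ *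
            ((2 : ℝ) ^ (-(n : ℤ) * J) * φ ((2 : ℝ) ^ (-J) • (u - v)))) -
        ∫ v, ‖∫ w, x w * ψ (v - w)‖ *
            ((2 : ℝ) ^ (-(n : ℤ) * J) * φ ((2 : ℝ) ^ (-J) • (u - v)))) 2 volume ≤
    ENNReal.ofReal ((2 : ℝ) ^ (-J) * ‖c‖ * (∫ u, ‖fderiv ℝ φ u‖) * ∫ u, ‖ψ u‖) *
      eLpNorm x 2 volume := by
  classical
  have hmpL : ∀ v : EuclideanSpace ℝ (Fin n),
      MeasurePreserving (fun w : EuclideanSpace ℝ (Fin n) => v - w) volume volume := by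
    intro v
    simpa [Function.comp_def, sub_eq_add_neg] using
      (measurePreserving_add_left volume v).comp
        (Measure.measurePreserving_neg (volume : Measure (EuclideanSpace ℝ (Fin n))))
  set x' : EuclideanSpace ℝ (Fin n) → ℂ := hx.1.mk x with hx'def
  set ψ' : EuclideanSpace ℝ (Fin n) → ℂ := hψ.1.mk ψ with hψ'def
  have hx'sm : StronglyMeasurable x' := hx.1.stronglyMeasurable_mk
  have hψ'sm : StronglyMeasurable ψ' := hψ.1.stronglyMeasurable_mk
  have hxae : x =ᵐ[volume] x' := hx.1.ae_eq_mk
  have hψae : ψ =ᵐ[volume] ψ' := hψ.1.ae_eq_mk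
  set f₀ : EuclideanSpace ℝ (Fin n) → ℂ := fun v => ∫ w, x' w * ψ' (v - w) with hf₀def
  have hf₀sm : StronglyMeasurable f₀ := by
    apply MeasureTheory.StronglyMeasurable.integral_prod_right'
      (f := fun p : EuclideanSpace ℝ (Fin n) × EuclideanSpace ℝ (Fin n) => x' p.2 * ψ' (p.1 - p.2))
    exact (hx'sm.comp_measurable measurable_snd).mul
      (hψ'sm.comp_measurable (measurable_fst.sub measurable_snd))
  set f : EuclideanSpace ℝ (Fin n) → ℝ := fun v => ‖f₀ v‖ with hfdef
  have hfsm : StronglyMeasurable f := hf₀sm.norm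
  set κ : EuclideanSpace ℝ (Fin n) → ℝ := fun t => (2:ℝ) ^ (-(n : ℤ) * J) * φ ((2:ℝ) ^ (-J) • t) with hκdef
  have hκcont : Continuous κ :=
    continuous_const.mul (hφ.continuous.comp (continuous_const_smul _))
  set g : EuclideanSpace ℝ (Fin n) → ℝ≥0∞ := fun t => (‖κ (t - c) - κ t‖₊ : ℝ≥0∞) with hgdef
  have hgmeas : Measurable g :=
    ((hκcont.comp (continuous_id.sub continuous_const)).sub hκcont).measurable.enorm
  -- inner rewrites
  have h1 : ∀ v : EuclideanSpace ℝ (Fin n), (∫ w, x w * ψ (v - w)) = f₀ v := by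
    intro v
    refine integral_congr_ae ?_
    filter_upwards [hxae, (hmpL v).quasiMeasurePreserving.ae_eq_comp hψae] with w hw hw'
    simp only [Function.comp] at hw'
    rw [hw, hw']
  have h2 : ∀ v : EuclideanSpace ℝ (Fin n), (∫ w, x (w - c) * ψ (v - w)) = f₀ (v - c) := by
    intro v
    have e1 : (∫ w, x (w - c) * ψ (v - w)) = ∫ w, x' (w - c) * ψ' (v - w) := by
      refine integral_congr_ae ?_
      filter_upwards [(measurePreserving_sub_right volume c
        ).quasiMeasurePreserving.ae_eq_comp hxae,
        (hmpL v).quasiMeasurePreserving.ae_eq_comp hψae] with w hw hw'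
      simp only [Function.comp] at hw hw'
      rw [hw, hw']
    rw [e1]
    calc ∫ w, x' (w - c) * ψ' (v - w)
        = ∫ w, x' (w - c) * ψ' (v - c - (w - c)) := by
          congr 1; funext w; rw [sub_sub_sub_cancel_right]
      _ = ∫ w, x' w * ψ' (v - c - w) :=
          integral_sub_right_eq_self (fun w => x' w * ψ' (v - c - w)) c
      _ = f₀ (v - c) := rfl
  -- rewrite the big function
  have hfun : (fun u : EuclideanSpace ℝ (Fin n) =>
      (∫ v, ‖∫ w, x (w - c) * ψ (v - w)‖ *
          ((2 : ℝ) ^ (-(n : ℤ) * J) * φ ((2 : ℝ) ^ (-J) • (u - v)))) -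
      ∫ v, ‖∫ w, x w * ψ (v - w)‖ *
          ((2 : ℝ) ^ (-(n : ℤ) * J) * φ ((2 : ℝ) ^ (-J) • (u - v)))) =
      fun u : EuclideanSpace ℝ (Fin n) => (∫ v, f v * κ (u - v - c)) - ∫ v, f v * κ (u - v) := by
    funext u
    congr 1
    · calc ∫ v, ‖∫ w, x (w - c) * ψ (v - w)‖ *
            ((2 : ℝ) ^ (-(n : ℤ) * J) * φ ((2 : ℝ) ^ (-J) • (u - v)))
          = ∫ v, f (v - c) * κ (u - v) := by
            refine integral_congr_ae (Filter.Eventually.of_forall fun v => ?_)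
            show ‖∫ w, x (w - c) * ψ (v - w)‖ * _ = _
            rw [h2 v]
        _ = ∫ v, f (v - c) * κ (u - c - (v - c)) := by
            congr 1; funext v; rw [sub_sub_sub_cancel_right]
        _ = ∫ v, f v * κ (u - c - v) :=
            integral_sub_right_eq_self (fun v => f v * κ (u - c - v)) c
        _ = ∫ v, f v * κ (u - v - c) := by
            congr 1; funext v; rw [sub_right_comm]
    · refine integral_congr_ae (Filter.Eventually.of_forall fun v => ?_)
      show ‖∫ w, x w * ψ (v - w)‖ * _ = _
      rw [h1 v]
  rw [hfun]
  -- pointwise bound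
  have hpt : ∀ u : EuclideanSpace ℝ (Fin n), (‖(∫ v, f v * κ (u - v - c)) - ∫ v, f v * κ (u - v)‖₊ : ℝ≥0∞) ≤
      ∫⁻ v, (‖f v‖₊ : ℝ≥0∞) * g (u - v) := by
    intro u
    set p1 : EuclideanSpace ℝ (Fin n) → ℝ := fun v => f v * κ (u - v - c) with hp1
    set p2 : EuclideanSpace ℝ (Fin n) → ℝ := fun v => f v * κ (u - v) with hp2
    set d : EuclideanSpace ℝ (Fin n) → ℝ := fun v => f v * (κ (u - v - c) - κ (u - v)) with hddef
    have hd : ∀ v, d v = p1 v - p2 v := fun v => mul_sub _ _ _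
    have hde : ∀ v, (‖d v‖₊ : ℝ≥0∞) = (‖f v‖₊ : ℝ≥0∞) * g (u - v) := by
      intro v
      have : u - v - c = (u - v) - c := rfl
      rw [hddef]
      simp only [nnnorm_mul, ENNReal.coe_mul, hgdef]
    have hdsm : AEStronglyMeasurable d volume :=
      (hfsm.mul (((hκcont.comp ((continuous_const.sub continuous_id).sub
        continuous_const)).sub (hκcont.comp
        (continuous_const.sub continuous_id))).stronglyMeasurable)).aestronglyMeasurable
    rcases eq_or_ne (∫⁻ v, (‖f v‖₊ : ℝ≥0∞) * g (u - v)) ∞ with hfin | hfin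
    · rw [hfin]; exact le_top
    · have hdint : Integrable d := by
        refine ⟨hdsm, ?_⟩
        rw [hasFiniteIntegral_def]
        calc ∫⁻ v, (‖d v‖₊ : ℝ≥0∞) = ∫⁻ v, (‖f v‖₊ : ℝ≥0∞) * g (u - v) :=
              lintegral_congr hde
          _ < ∞ := hfin.lt_top
      by_cases h2i : Integrable p2
      · have h1i : Integrable p1 := by
          have := h2i.add hdint
          have e : p2 + d = p1 := by funext v; simp [hd v]
          rwa [e] at this
        rw [← integral_sub h1i h2i]
        calc (‖∫ v, (p1 v - p2 v)‖₊ : ℝ≥0∞)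
            = (‖∫ v, d v‖₊ : ℝ≥0∞) := by
              congr 1; apply congrArg; congr 1; funext v; rw [hd v]
          _ ≤ ∫⁻ v, (‖d v‖₊ : ℝ≥0∞) := enorm_integral_le_lintegral_enorm _
          _ = ∫⁻ v, (‖f v‖₊ : ℝ≥0∞) * g (u - v) := lintegral_congr hde
      · have h1i : ¬ Integrable p1 := by
          intro h1i
          apply h2i
          have := h1i.sub hdint
          have e : p1 - d = p2 := by funext v; simp [hd v]
          rwa [e] at this
        rw [integral_undef h1i, integral_undef h2i]
        simp
  -- eLpNorm chain
  set F : EuclideanSpace ℝ (Fin n) → ℝ≥0∞ := fun v => (‖f v‖₊ : ℝ≥0∞) with hFdef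
  have hFmeas : Measurable F := hfsm.measurable.enorm
  have htwo : ((2:ℝ≥0∞)).toReal = (2:ℝ) := by norm_num
  have help : ∀ h : EuclideanSpace ℝ (Fin n) → ℝ, eLpNorm h 2 volume =
      (∫⁻ u, (‖h u‖₊ : ℝ≥0∞) ^ (2:ℝ)) ^ ((2:ℝ)⁻¹) := by
    intro h
    rw [eLpNorm_eq_lintegral_rpow_enorm_toReal two_ne_zero (by norm_num), htwo, one_div]
    rfl
  have helpC : ∀ h : EuclideanSpace ℝ (Fin n) → ℂ, eLpNorm h 2 volume =
      (∫⁻ u, (‖h u‖₊ : ℝ≥0∞) ^ (2:ℝ)) ^ ((2:ℝ)⁻¹) := by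
    intro h
    rw [eLpNorm_eq_lintegral_rpow_enorm_toReal two_ne_zero (by norm_num), htwo, one_div]
    rfl
  -- step IV: (∫⁻ F²)^(1/2) ≤ eLpNorm x 2 * ofReal (∫ ‖ψ‖)
  set X : EuclideanSpace ℝ (Fin n) → ℝ≥0∞ := fun w => (‖x' w‖₊ : ℝ≥0∞) with hXdef
  set Ψ : EuclideanSpace ℝ (Fin n) → ℝ≥0∞ := fun w => (‖ψ' w‖₊ : ℝ≥0∞) with hΨdef
  have hXmeas : Measurable X := hx'sm.measurable.enorm
  have hΨmeas : Measurable Ψ := hψ'sm.measurable.enorm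
  have hF_le : ∀ v : EuclideanSpace ℝ (Fin n), F v ≤ ∫⁻ w, X w * Ψ (v - w) := by
    intro v
    calc F v = (‖f₀ v‖₊ : ℝ≥0∞) := by
          rw [hFdef]; simp only [hfdef]; rw [nnnorm_norm]
      _ ≤ ∫⁻ w, (‖x' w * ψ' (v - w)‖₊ : ℝ≥0∞) := enorm_integral_le_lintegral_enorm _
      _ = ∫⁻ w, X w * Ψ (v - w) := by
          refine lintegral_congr fun w => ?_
          simp [nnnorm_mul]
          rfl
  have hstep4 : (∫⁻ v, F v ^ (2:ℝ)) ^ ((2:ℝ)⁻¹) ≤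
      eLpNorm x 2 volume * ENNReal.ofReal (∫ u, ‖ψ u‖) := by
    calc (∫⁻ v, F v ^ (2:ℝ)) ^ ((2:ℝ)⁻¹)
        ≤ (∫⁻ v, (∫⁻ w, X w * Ψ (v - w)) ^ (2:ℝ)) ^ ((2:ℝ)⁻¹) := by
          refine ENNReal.rpow_le_rpow (lintegral_mono fun v => ?_) (by norm_num)
          exact ENNReal.rpow_le_rpow (hF_le v) (by norm_num)
      _ ≤ (∫⁻ w, X w ^ (2:ℝ)) ^ ((2:ℝ)⁻¹) * ∫⁻ w, Ψ w := youngL2 X Ψ hXmeas hΨmeas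
      _ = eLpNorm x 2 volume * ENNReal.ofReal (∫ u, ‖ψ u‖) := by
          congr 1
          · rw [← helpC x', eLpNorm_congr_ae hxae.symm]
          · have e : ∫⁻ w, Ψ w = ∫⁻ w, (‖ψ w‖₊ : ℝ≥0∞) := by
              refine lintegral_congr_ae ?_
              filter_upwards [hψae] with w hw
              rw [hΨdef, hw]
            rw [e]
            exact (ofReal_integral_norm_eq_lintegral_enorm hψ).symm
  -- main chain
  calc eLpNorm (fun u : EuclideanSpace ℝ (Fin n) => (∫ v, f v * κ (u - v - c)) - ∫ v, f v * κ (u - v)) 2 volume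
      = (∫⁻ u, (‖(∫ v, f v * κ (u - v - c)) - ∫ v, f v * κ (u - v)‖₊ : ℝ≥0∞) ^ (2:ℝ)) ^
          ((2:ℝ)⁻¹) := help _
    _ ≤ (∫⁻ u, (∫⁻ v, F v * g (u - v)) ^ (2:ℝ)) ^ ((2:ℝ)⁻¹) := by
        refine ENNReal.rpow_le_rpow (lintegral_mono fun u => ?_) (by norm_num)
        exact ENNReal.rpow_le_rpow (hpt u) (by norm_num)
    _ ≤ (∫⁻ v, F v ^ (2:ℝ)) ^ ((2:ℝ)⁻¹) * ∫⁻ t, g t := youngL2 F g hFmeas hgmeas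
    _ ≤ (eLpNorm x 2 volume * ENNReal.ofReal (∫ u, ‖ψ u‖)) * ∫⁻ t, g t :=
        mul_le_mul_left hstep4 _
    _ ≤ (eLpNorm x 2 volume * ENNReal.ofReal (∫ u, ‖ψ u‖)) *
          ENNReal.ofReal ((2:ℝ) ^ (-J) * ‖c‖ * ∫ u, ‖fderiv ℝ φ u‖) :=
        mul_le_mul_right (kernel_L1 J φ hφ hsupp c) _
    _ = ENNReal.ofReal ((2 : ℝ) ^ (-J) * ‖c‖ * (∫ u, ‖fderiv ℝ φ u‖) * ∫ u, ‖ψ u‖) *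
          eLpNorm x 2 volume := by
        rw [ENNReal.ofReal_mul (by positivity :
          (0:ℝ) ≤ 2 ^ (-J) * ‖c‖ * ∫ u, ‖fderiv ℝ φ u‖)]
        ring
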